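/- (Dumont–Ramamonjisoa) For every integer n ≥ 1, D_G^{n−1}(A·S) = ∑_{k=0}^{n−1} Q_{n,k}(0) · A^{n+k} · S^{n}, as an identity in the polynomial ring ℚ[A,S], where Q_{n,k}(0) ∈ ℚ denotes the evaluation of the polynomial Q_{n,k} at 0. -/

import Mathlib

open Polynomial
/-- The Ramanujan–Shor polynomials `Q n k ∈ ℚ[x]`. -/
noncomputable def ramanujanShorQ : ℕ → ℤ → Polynomial ℚ
  | 0, _ => 0
  | 1, k => if k = 0 then 1 else 0
  | (n + 2), k =>
      if 0 ≤ k ∧ k ≤ (n : ℤ) + 1 then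
        (Polynomial.X + Polynomial.C ((n : ℚ) + 1)) * ramanujanShorQ (n + 1) k
          + Polynomial.C (((n : ℤ) + k : ℤ) : ℚ) * ramanujanShorQ (n + 1) (k - 1)
      else 0

noncomputable def rsq (n : ℕ) (k : ℤ) : ℚ := (ramanujanShorQ n k).eval 0

lemma rsq_rec (n : ℕ) (k : ℤ) (h0 : 0 ≤ k) (h1 : k ≤ (n:ℤ)+1) :
    rsq (n+2) k = ((n:ℚ)+1) * rsq (n+1) k + ((n:ℚ)+(k:ℚ)) * rsq (n+1) (k-1) := by
  unfold rsq
  conv_lhs => rw [ramanujanShorQ]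
  rw [if_pos ⟨h0, h1⟩]
  simp only [eval_add, eval_mul, eval_X, eval_C]
  push_cast
  ring

lemma rsq_neg (n : ℕ) (k : ℤ) (hk : k < 0) : rsq n k = 0 := by
  match n with
  | 0 => simp [rsq, ramanujanShorQ]
  | 1 => simp only [rsq, ramanujanShorQ]; rw [if_neg (by omega)]; simp
  | n+2 => simp only [rsq, ramanujanShorQ]; rw [if_neg (by omega)]; simp

lemma rsq_big (n : ℕ) (k : ℤ) (hk : (n:ℤ) ≤ k) : rsq n k = 0 := by
  match n with
  | 0 => simp [rsq, ramanujanShorQ]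
  | 1 => simp only [rsq, ramanujanShorQ]; rw [if_neg (by omega)]; simp
  | n+2 => simp only [rsq, ramanujanShorQ]; rw [if_neg (by push_cast; omega)]; simp

open MvPolynomial in
lemma Dterm (D : Derivation ℚ (MvPolynomial (Fin 2) ℚ) (MvPolynomial (Fin 2) ℚ))
    (hA : D (X 0) = (X 0) ^ 3 * X 1)
    (hS : D (X 1) = X 0 * (X 1) ^ 2)
    (c : ℚ) (a b : ℕ) (ha : 1 ≤ a) (hb : 1 ≤ b) :
    D (MvPolynomial.C c * X 0 ^ a * X 1 ^ b)
      = MvPolynomial.C (c * a) * X 0 ^ (a+2) * X 1 ^ (b+1)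
        + MvPolynomial.C (c * b) * X 0 ^ (a+1) * X 1 ^ (b+1) := by
  obtain ⟨a, rfl⟩ : ∃ a', a = a'+1 := ⟨a-1, by omega⟩
  obtain ⟨b, rfl⟩ : ∃ b', b = b'+1 := ⟨b-1, by omega⟩
  rw [mul_assoc, ← MvPolynomial.smul_eq_C_mul, D.map_smul, D.leibniz,
    D.leibniz_pow, D.leibniz_pow, hA, hS]
  simp only [smul_eq_mul, MvPolynomial.smul_eq_C_mul, nsmul_eq_mul, Nat.cast_add, Nat.cast_one, map_mul, map_add,
    map_natCast, map_one]
  push_cast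
  ring

open MvPolynomial in
lemma key (D : Derivation ℚ (MvPolynomial (Fin 2) ℚ) (MvPolynomial (Fin 2) ℚ))
    (hA : D (X 0) = (X 0) ^ 3 * X 1)
    (hS : D (X 1) = X 0 * (X 1) ^ 2) (m : ℕ) :
    (⇑D)^[m] (X 0 * X 1) = ∑ k ∈ Finset.range (m+1),
      MvPolynomial.C (rsq (m+1) (k:ℤ)) * (X 0)^(m+1+k) * (X 1)^(m+1) := by
  induction m with
  | zero => simp [rsq, ramanujanShorQ]
  | succ m ih =>
    rw [Function.iterate_succ_apply', ih, map_sum]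
    have hL : ∀ k ∈ Finset.range (m+1),
        D (MvPolynomial.C (rsq (m+1) (k:ℤ)) * X 0 ^ (m+1+k) * X 1 ^ (m+1))
        = MvPolynomial.C (rsq (m+1) (k:ℤ) * ((m+1+k : ℕ) : ℚ)) * X 0 ^ (m+1+k+2) * X 1 ^ (m+1+1)
          + MvPolynomial.C (rsq (m+1) (k:ℤ) * ((m+1 : ℕ) : ℚ)) * X 0 ^ (m+1+k+1) * X 1 ^ (m+1+1) :=
      fun k _ => Dterm D hA hS _ _ _ (by omega) (by omega)
    rw [Finset.sum_congr rfl hL, Finset.sum_add_distrib]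
    have hR : ∀ k ∈ Finset.range (m+1+1),
        MvPolynomial.C (rsq (m+1+1) (k:ℤ)) * (X (0 : Fin 2) : MvPolynomial (Fin 2) ℚ) ^ (m+1+1+k) * (X (1 : Fin 2) : MvPolynomial (Fin 2) ℚ) ^ (m+1+1)
        = MvPolynomial.C (((m:ℚ)+1) * rsq (m+1) (k:ℤ)) * (X (0 : Fin 2) : MvPolynomial (Fin 2) ℚ) ^ (m+1+1+k) * (X (1 : Fin 2) : MvPolynomial (Fin 2) ℚ) ^ (m+1+1)
          + MvPolynomial.C (((m:ℚ)+(k:ℚ)) * rsq (m+1) ((k:ℤ)-1)) * (X (0 : Fin 2) : MvPolynomial (Fin 2) ℚ) ^ (m+1+1+k) * (X (1 : Fin 2) : MvPolynomial (Fin 2) ℚ) ^ (m+1+1) := by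
      intro k hk
      rw [show ((m:ℕ)+1+1 : ℕ) = m+2 from rfl, rsq_rec m k (by positivity)
        (by simp only [Finset.mem_range] at hk; exact_mod_cast by omega), map_add, add_mul, add_mul]
      push_cast
      ring_nf
    refine Eq.trans ?_ (Finset.sum_congr rfl hR).symm
    rw [Finset.sum_add_distrib, Finset.sum_range_succ (fun k => MvPolynomial.C (((m:ℚ)+1) * rsq (m+1) (k:ℤ)) * (X (0 : Fin 2) : MvPolynomial (Fin 2) ℚ) ^ (m+1+1+k) * (X (1 : Fin 2) : MvPolynomial (Fin 2) ℚ) ^ (m+1+1)),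
      rsq_big (m+1) (((m+1 : ℕ)) : ℤ) (by push_cast; omega),
      Finset.sum_range_succ' (fun k => MvPolynomial.C (((m:ℚ)+(k:ℚ)) * rsq (m+1) ((k:ℤ)-1)) * (X (0 : Fin 2) : MvPolynomial (Fin 2) ℚ) ^ (m+1+1+k) * (X (1 : Fin 2) : MvPolynomial (Fin 2) ℚ) ^ (m+1+1))]
    rw [show ((0:ℕ):ℤ) - 1 = -1 from rfl, rsq_neg (m+1) (-1) (by omega)]
    simp only [map_zero, zero_mul, mul_zero, add_zero, Nat.cast_zero]
    rw [add_comm (∑ k ∈ Finset.range (m+1), MvPolynomial.C (((m:ℚ)+1) * rsq (m+1) (k:ℤ)) * (X (0 : Fin 2) : MvPolynomial (Fin 2) ℚ) ^ (m+1+1+k) * (X (1 : Fin 2) : MvPolynomial (Fin 2) ℚ) ^ (m+1+1)) _]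
    refine congrArg₂ (· + ·) ?_ ?_
    · apply Finset.sum_congr rfl
      intro k hk
      push_cast
      ring_nf
    · apply Finset.sum_congr rfl
      intro k hk
      push_cast
      ring_nf

open MvPolynomial in
theorem dumont_ramamonjisoa
    (D : Derivation ℚ (MvPolynomial (Fin 2) ℚ) (MvPolynomial (Fin 2) ℚ))
    (hA : D (X 0) = (X 0) ^ 3 * X 1)
    (hS : D (X 1) = X 0 * (X 1) ^ 2)
    (n : ℕ) (hn : 1 ≤ n) :
    (⇑D)^[n - 1] (X 0 * X 1)
      = ∑ k ∈ Finset.range n,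
          MvPolynomial.C (Polynomial.eval 0 (ramanujanShorQ n (k : ℤ)))
            * (X 0) ^ (n + k) * (X 1) ^ n := by
  obtain ⟨m, rfl⟩ : ∃ m, n = m + 1 := ⟨n - 1, by omega⟩
  exact key D hA hS m
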